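/- If a position p in a word u is defined by some ranker r ∈ R̲^X_{m,n} (i.e., r(u) = p), then there exists a ranker s ∈ R̲^X_{m,n} that is condensed on u with s(u) = p. The dual statement holds for R̲^Y_{m,n}. -/

import Mathlib

namespace Rankers

/-- Ranker letters: `X a` means "go to the next `a` to the right",
`Y a` means "go to the next `a` to the left". -/
inductive RL (A : Type*) where
  | X : A → RL A
  | Y : A → RL A

variable {A : Type*} [DecidableEq A]

/-- The least position `i` (1-based) with `q < i` and `u[i] = a`, if any. -/
def posX (u : List A) (a : A) (q : ℕ) : Option ℕ :=
  (((List.range u.length).map (· + 1)).filter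
    (fun i => decide (q < i ∧ u[i - 1]? = some a))).head?

/-- The greatest position `i` (1-based) with `i < q` and `u[i] = a`, if any. -/
def posY (u : List A) (a : A) (q : ℕ) : Option ℕ :=
  (((List.range u.length).map (· + 1)).filter
    (fun i => decide (i < q ∧ u[i - 1]? = some a))).getLast?

def rstep (u : List A) : RL A → ℕ → Option ℕ
  | RL.X a, q => posX u a q
  | RL.Y a, q => posY u a q

def evalFrom (u : List A) : List (RL A) → ℕ → Option ℕ
  | [], q => some q
  | z :: r, q => (rstep u z q).bind (evalFrom u r)

/-- Starting position of a ranker: `0` for `X`-rankers, `|u|+1` for `Y`-rankers. -/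
def rstart (u : List A) : List (RL A) → ℕ
  | RL.X _ :: _ => 0
  | _ => u.length + 1

/-- Evaluation `r(u)` of a ranker on a word. -/
def reval (u : List A) (r : List (RL A)) : Option ℕ := evalFrom u r (rstart u r)

/-- The ranker `r` is defined on `u`; `L(r) = {u | RDefined u r}`. -/
def RDefined (u : List A) (r : List (RL A)) : Prop := (reval u r).isSome

/-- The zooming-in chain of the Kufleitner-Weil "condensed" condition, with current
open interval `(i,j)`.  An `X`-step is evaluated from `i`, a `Y`-step from `j`,
the new position must lie strictly inside `(i,j)`, and the interval is updated
according to the direction of the next letter. -/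
def Cond (u : List A) : List (RL A) → ℕ → ℕ → Prop
  | [], _, _ => True
  | RL.X a :: r, i, j =>
      ∃ q, posX u a i = some q ∧ q < j ∧
        (match r with
         | RL.Y _ :: _ => Cond u r i q
         | _ => Cond u r q j)
  | RL.Y a :: r, i, j =>
      ∃ q, posY u a j = some q ∧ i < q ∧
        (match r with
         | RL.X _ :: _ => Cond u r q j
         | _ => Cond u r i q)

/-- The ranker `r` is condensed on `u`; `L_c(r) = {u | Condensed u r}`. -/
def Condensed (u : List A) (r : List (RL A)) : Prop :=
  r ≠ [] ∧ Cond u r 0 (u.length + 1)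


def isXletter : RL A → Bool
  | RL.X _ => true
  | RL.Y _ => false

/-- Number of blocks (maximal runs of `X`-letters or of `Y`-letters) of a ranker. -/
def nBlocks (r : List (RL A)) : ℕ := ((r.map isXletter).destutter (· ≠ ·)).length

def startsX : List (RL A) → Prop
  | RL.X _ :: _ => True
  | _ => False

def startsY : List (RL A) → Prop
  | RL.Y _ :: _ => True
  | _ => False

/-- Membership in `R̲^X_{m,n} = ⋃_{n'≤n} R^X_{m,n'} ∪ ⋃_{m'<m, n'<n} R_{m',n'}`:
either depth `≤ n`, exactly `m` blocks and starting with an `X`-block, or fewer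
than `m` blocks and depth `< n`. -/
def memRX (m n : ℕ) (r : List (RL A)) : Prop :=
  r ≠ [] ∧ ((r.length ≤ n ∧ nBlocks r = m ∧ startsX r) ∨ (nBlocks r < m ∧ r.length < n))

/-- Membership in `R̲^Y_{m,n}` (the dual class). -/
def memRY (m n : ℕ) (r : List (RL A)) : Prop :=
  r ≠ [] ∧ ((r.length ≤ n ∧ nBlocks r = m ∧ startsY r) ∨ (nBlocks r < m ∧ r.length < n))

/-- `u ▷_{m,n} v`: agreement on condensed rankers from `R̲^X_{m,n}`. -/
def triR (m n : ℕ) (u v : List A) : Prop :=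
  ∀ r : List (RL A), memRX m n r → (Condensed u r ↔ Condensed v r)

/-- `u ◁_{m,n} v`: agreement on condensed rankers from `R̲^Y_{m,n}`. -/
def triL (m n : ℕ) (u v : List A) : Prop :=
  ∀ r : List (RL A), memRY m n r → (Condensed u r ↔ Condensed v r)
section Helpers

lemma mapRange (n : ℕ) : ((List.range n).map (· + 1)) = List.range' 1 n := by
  rw [List.range'_eq_map_range]
  exact (List.map_congr_left fun x _ => Nat.add_comm 1 x).symm

lemma head?_filter_range' (p : ℕ → Bool) :
    ∀ (n s q : ℕ), ((List.range' s n).filter p).head? = some q ↔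
      (s ≤ q ∧ q < s + n ∧ p q = true ∧ ∀ t, s ≤ t → t < q → p t = false) := by
  intro n
  induction n with
  | zero => intro s q; simp; omega
  | succ n ih =>
    intro s q
    rw [List.range'_succ]
    by_cases hps : p s = true
    · rw [List.filter_cons_of_pos hps]
      simp only [List.head?_cons, Option.some_inj]
      constructor
      · rintro rfl
        exact ⟨le_rfl, by omega, hps, fun t h1 h2 => absurd (lt_of_le_of_lt h1 h2) (lt_irrefl _)⟩
      · rintro ⟨h1, h2, h3, h4⟩
        by_contra hne
        have hsq : s < q := lt_of_le_of_ne h1 hne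
        have := h4 s le_rfl hsq
        rw [hps] at this; exact Bool.noConfusion this
    · have hps' : p s = false := by simpa using hps
      rw [List.filter_cons_of_neg (by simp [hps']), ih (s + 1) q]
      constructor
      · rintro ⟨h1, h2, h3, h4⟩
        refine ⟨by omega, by omega, h3, fun t ht1 ht2 => ?_⟩
        rcases Nat.eq_or_lt_of_le ht1 with rfl | h
        · exact hps'
        · exact h4 t h ht2
      · rintro ⟨h1, h2, h3, h4⟩
        have hsq : s < q := by
          rcases Nat.eq_or_lt_of_le h1 with rfl | h
          · rw [hps'] at h3; exact Bool.noConfusion h3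
          · exact h
        exact ⟨by omega, by omega, h3, fun t ht1 ht2 => h4 t (by omega) ht2⟩

lemma getLast?_filter_range' (p : ℕ → Bool) :
    ∀ (n s q : ℕ), ((List.range' s n).filter p).getLast? = some q ↔
      (s ≤ q ∧ q < s + n ∧ p q = true ∧ ∀ t, q < t → t < s + n → p t = false) := by
  intro n
  induction n with
  | zero => intro s q; simp; omega
  | succ n ih =>
    intro s q
    rw [List.range'_1_concat, List.filter_append]
    by_cases hp : p (s + n) = true
    · rw [List.filter_cons_of_pos hp, List.filter_nil, List.getLast?_concat]
      simp only [Option.some_inj]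
      constructor
      · rintro rfl
        exact ⟨by omega, by omega, hp, fun t h1 h2 => by omega⟩
      · rintro ⟨h1, h2, h3, h4⟩
        by_contra hne
        have : q < s + n := by omega
        have := h4 (s + n) this (by omega)
        rw [hp] at this; exact Bool.noConfusion this
    · have hp' : p (s + n) = false := by simpa using hp
      rw [List.filter_cons_of_neg (by simp [hp']), List.filter_nil, List.append_nil, ih s q]
      constructor
      · rintro ⟨h1, h2, h3, h4⟩
        refine ⟨h1, by omega, h3, fun t ht1 ht2 => ?_⟩
        by_cases h : t = s + n
        · subst h; exact hp'
        · exact h4 t ht1 (by omega)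
      · rintro ⟨h1, h2, h3, h4⟩
        have hq : q ≠ s + n := fun h => by rw [h, hp'] at h3; exact Bool.noConfusion h3
        exact ⟨h1, by omega, h3, fun t ht1 ht2 => h4 t ht1 (by omega)⟩

end Helpers
section Char

variable {A : Type*} [DecidableEq A]

lemma posX_eq_some_iff {u : List A} {a : A} {x q : ℕ} :
    posX u a x = some q ↔
      (x < q ∧ q ≤ u.length ∧ u[q - 1]? = some a ∧
        ∀ t, x < t → t < q → u[t - 1]? ≠ some a) := by
  unfold posX
  rw [mapRange, head?_filter_range']
  simp only [decide_eq_true_eq, decide_eq_false_iff_not, not_and]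
  constructor
  · rintro ⟨h1, h2, ⟨h3, h4⟩, h5⟩
    exact ⟨h3, by omega, h4, fun t ht1 ht2 h => h5 t (by omega) ht2 ht1 h⟩
  · rintro ⟨h1, h2, h3, h4⟩
    exact ⟨by omega, by omega, ⟨h1, h3⟩, fun t ht1 ht2 h5 h6 => h4 t h5 ht2 h6⟩

lemma posY_eq_some_iff {u : List A} {a : A} {x q : ℕ} :
    posY u a x = some q ↔
      (q < x ∧ 1 ≤ q ∧ q ≤ u.length ∧ u[q - 1]? = some a ∧
        ∀ t, q < t → t < x → u[t - 1]? ≠ some a) := by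
  unfold posY
  rw [mapRange, getLast?_filter_range']
  simp only [decide_eq_true_eq, decide_eq_false_iff_not, not_and]
  constructor
  · rintro ⟨h1, h2, ⟨h3, h4⟩, h5⟩
    refine ⟨h3, h1, by omega, h4, fun t ht1 ht2 h => ?_⟩
    by_cases ht : t ≤ u.length
    · exact h5 t ht1 (by omega) ht2 h
    · have hnone : u[t - 1]? = none := List.getElem?_eq_none_iff.mpr (by omega)
      rw [hnone] at h; exact nomatch h
  · rintro ⟨h1, h2, h3, h4, h5⟩
    exact ⟨h2, by omega, ⟨h1, h4⟩, fun t ht1 ht2 h6 h7 => h5 t ht1 h6 h7⟩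

lemma evalFrom_append (u : List A) (r1 r2 : List (RL A)) (c : ℕ) :
    evalFrom u (r1 ++ r2) c = (evalFrom u r1 c).bind (evalFrom u r2) := by
  induction r1 generalizing c with
  | nil => simp [evalFrom]
  | cons z r1 ih =>
    show (rstep u z c).bind (evalFrom u (r1 ++ r2)) = _
    rw [show evalFrom u (z :: r1) c = (rstep u z c).bind (evalFrom u r1) from rfl]
    rw [Option.bind_assoc]
    cases rstep u z c with
    | none => simp
    | some q => simp [ih]

lemma head?_append_left {α : Type*} {l t : List α} (h : l ≠ []) :
    (l ++ t).head? = l.head? := by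
  cases l with
  | nil => exact absurd rfl h
  | cons a l => rfl

lemma head?_of_prefix {α : Type*} {l₁ l₂ : List α} (h : l₁ <+: l₂) (hne : l₁ ≠ []) :
    l₂.head? = l₁.head? := by
  obtain ⟨t, rfl⟩ := h
  exact (head?_append_left hne)

end Char
section Blocks

lemma destutter'_len_flip :
    ∀ (l : List Bool) (a b : Bool),
      (l.destutter' (· ≠ ·) a).length ≤ (l.destutter' (· ≠ ·) b).length + 1 := by
  intro l
  induction l with
  | nil => intro a b; simp [List.destutter'_nil]
  | cons c l ih =>
    intro a b
    cases a <;> cases b <;> cases c <;> simp [List.destutter'_cons, ne_eq] at * <;> omega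

lemma destutter'_len_mono {l1 l2 : List Bool} (h : l1.Sublist l2) :
    ∀ b, (l1.destutter' (· ≠ ·) b).length ≤ (l2.destutter' (· ≠ ·) b).length := by
  induction h with
  | slnil => intro b; exact le_rfl
  | @cons l1 l2 a h ih =>
    intro b
    have h1 := ih true
    have h2 := ih false
    have h3 := destutter'_len_flip l2 true false
    have h4 := destutter'_len_flip l2 false true
    cases a <;> cases b <;> simp [List.destutter'_cons, ne_eq] at * <;> omega
  | @cons_cons l1 l2 a h ih =>
    intro b
    have h1 := ih true
    have h2 := ih false
    cases a <;> cases b <;> simp [List.destutter'_cons, ne_eq] at * <;> omega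

lemma destutter_le_destutter' (l : List Bool) (b : Bool) :
    (l.destutter (· ≠ ·)).length ≤ (l.destutter' (· ≠ ·) b).length := by
  cases l with
  | nil => simp [List.destutter_nil, List.destutter'_nil]
  | cons c l =>
    have h1 := destutter'_len_flip l true false
    have h2 := destutter'_len_flip l false true
    cases b <;> cases c <;>
      simp [List.destutter_cons', List.destutter'_cons] <;> omega

lemma destutter_len_mono {l1 l2 : List Bool} (h : l1.Sublist l2) :
    (l1.destutter (· ≠ ·)).length ≤ (l2.destutter (· ≠ ·)).length := by
  induction h with
  | slnil => exact le_rfl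
  | @cons l1 l2 a h ih =>
    refine ih.trans ?_
    rw [List.destutter_cons']
    exact destutter_le_destutter' _ a
  | @cons_cons l1 l2 a h ih =>
    rw [List.destutter_cons', List.destutter_cons']
    exact destutter'_len_mono h a

end Blocks
section Starts

variable {A : Type*} [DecidableEq A]

lemma nBlocks_mono {s r : List (RL A)} (h : s.Sublist r) : nBlocks s ≤ nBlocks r :=
  destutter_len_mono (h.map isXletter)

lemma startsX_of_head? {s r : List (RL A)} (h : s.head? = r.head?) (hr : startsX r) :
    startsX s := by
  cases r with
  | nil => exact hr.elim
  | cons z t =>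
    cases z with
    | X a =>
      cases s with
      | nil => simp at h
      | cons w t' =>
        simp only [List.head?_cons, Option.some_inj] at h
        subst h; trivial
    | Y a => exact hr.elim

lemma startsY_of_head? {s r : List (RL A)} (h : s.head? = r.head?) (hr : startsY r) :
    startsY s := by
  cases r with
  | nil => exact hr.elim
  | cons z t =>
    cases z with
    | Y a =>
      cases s with
      | nil => simp at h
      | cons w t' =>
        simp only [List.head?_cons, Option.some_inj] at h
        subst h; trivial
    | X a => exact hr.elim

lemma rstart_eq_of_head? {u : List A} {s r : List (RL A)} (h : s.head? = r.head?) :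
    rstart u s = rstart u r := by
  cases s with
  | nil =>
    cases r with
    | nil => rfl
    | cons z t => simp at h
  | cons w t' =>
    cases r with
    | nil => simp at h
    | cons z t =>
      simp only [List.head?_cons, Option.some_inj] at h
      subst h
      cases w <;> rfl

lemma startsX_rstart {u : List A} {r : List (RL A)} (h : startsX r) : rstart u r = 0 := by
  cases r with
  | nil => exact h.elim
  | cons z t => cases z with
    | X a => rfl
    | Y a => exact h.elim

lemma startsY_rstart {u : List A} {r : List (RL A)} (h : startsY r) :
    rstart u r = u.length + 1 := by
  cases r with
  | nil => exact h.elim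
  | cons z t => cases z with
    | X a => exact h.elim
    | Y a => rfl

end Starts
section Main

variable {A : Type*} [DecidableEq A]

lemma main_lemma (u : List A) (st p : ℕ) :
    ∀ (rest pre : List (RL A)) (c i j : ℕ),
      evalFrom u pre st = some c →
      (startsX rest → i = c) →
      (startsY rest → j = c) →
      i < j →
      (i = 0 ∨ ∃ pi, pi <+: pre ∧ pi ≠ [] ∧ evalFrom u pi st = some i ∧
        (startsY rest → pi.length < pre.length)) →
      (j = u.length + 1 ∨ ∃ pj, pj <+: pre ∧ pj ≠ [] ∧ evalFrom u pj st = some j ∧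
        (startsX rest → pj.length < pre.length)) →
      evalFrom u rest c = some p →
      Cond u rest i j ∨
        ∃ s, s.Sublist (pre ++ rest) ∧ s.length < pre.length + rest.length ∧ s ≠ [] ∧
          s.head? = (pre ++ rest).head? ∧ evalFrom u s st = some p := by
  intro rest
  induction rest with
  | nil => intros; exact Or.inl trivial
  | cons z r' ih =>
    intro pre c i j hpre halX halY hij certI certJ hrest
    cases z with
    | X a =>
      have hic : i = c := halX trivial
      rw [show evalFrom u (RL.X a :: r') c = (posX u a c).bind (evalFrom u r') from rfl] at hrest
      obtain ⟨q, hq, hr'⟩ := Option.bind_eq_some_iff.mp hrest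
      obtain ⟨hcq, hqlen, hqa, hmin⟩ := posX_eq_some_iff.mp hq
      have hpre' : evalFrom u (pre ++ [RL.X a]) st = some q := by
        rw [evalFrom_append, hpre]
        show (posX u a c).bind (evalFrom u []) = some q
        rw [hq]; rfl
      by_cases hqj : q < j
      · -- no violation
        match r' with
        | [] =>
          rcases ih (pre ++ [RL.X a]) q q j hpre' (fun h => h.elim) (fun h => h.elim) hqj
              (Or.inr ⟨pre ++ [RL.X a], List.prefix_refl _, by simp, hpre', fun h => h.elim⟩)
              (certJ.imp id (fun ⟨pj, h1, h2, h3, h4⟩ =>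
                ⟨pj, h1.trans (List.prefix_append _ _), h2, h3, fun h => h.elim⟩))
              hr' with hc | ⟨s, hs1, hs2, hs3, hs4, hs5⟩
          · exact Or.inl ⟨q, hic ▸ hq, hqj, hc⟩
          · refine Or.inr ⟨s, by simpa using hs1, by simp at hs2 ⊢; omega, hs3, ?_, hs5⟩
            rw [hs4]; simp
        | RL.X b :: r'' =>
          rcases ih (pre ++ [RL.X a]) q q j hpre' (fun _ => rfl) (fun h => h.elim) hqj
              (Or.inr ⟨pre ++ [RL.X a], List.prefix_refl _, by simp, hpre', fun h => h.elim⟩)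
              (certJ.imp id (fun ⟨pj, h1, h2, h3, h4⟩ =>
                ⟨pj, h1.trans (List.prefix_append _ _), h2, h3, fun _ => by
                  have := h4 trivial; simp; omega⟩))
              hr' with hc | ⟨s, hs1, hs2, hs3, hs4, hs5⟩
          · exact Or.inl ⟨q, hic ▸ hq, hqj, hc⟩
          · refine Or.inr ⟨s, by simpa using hs1, by simp at hs2 ⊢; omega, hs3, ?_, hs5⟩
            rw [hs4]; simp
        | RL.Y b :: r'' =>
          rcases ih (pre ++ [RL.X a]) q i q hpre' (fun h => h.elim) (fun _ => rfl)
              (by omega)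
              (certI.imp id (fun ⟨pi, h1, h2, h3, h4⟩ =>
                ⟨pi, h1.trans (List.prefix_append _ _), h2, h3, fun _ => by
                  have := h1.length_le; simp; omega⟩))
              (Or.inr ⟨pre ++ [RL.X a], List.prefix_refl _, by simp, hpre', fun h => h.elim⟩)
              hr' with hc | ⟨s, hs1, hs2, hs3, hs4, hs5⟩
          · exact Or.inl ⟨q, hic ▸ hq, hqj, hc⟩
          · refine Or.inr ⟨s, by simpa using hs1, by simp at hs2 ⊢; omega, hs3, ?_, hs5⟩
            rw [hs4]; simp
      · -- violation: j ≤ q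
        have hjq : j ≤ q := Nat.le_of_not_lt hqj
        rcases certJ with rfl | ⟨pj, hpj1, hpj2, hpj3, hpj4⟩
        · omega
        have hjlt : pj.length < pre.length := hpj4 trivial
        have hprene : pre ≠ [] := by
          intro h; rw [h] at hjlt; simp at hjlt
        have hheads : pj.head? = (pre ++ (RL.X a :: r')).head? := by
          rw [head?_append_left hprene, head?_of_prefix hpj1 hpj2]
        by_cases hqj' : q = j
        · refine Or.inr ⟨pj ++ r', ?_, ?_, ?_, ?_, ?_⟩
          · exact hpj1.sublist.append (List.sublist_cons_self _ _)
          · simp only [List.length_append, List.length_cons]; omega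
          · intro h; rw [List.append_eq_nil_iff] at h; exact hpj2 h.1
          · rw [head?_append_left hpj2]; exact hheads
          · rw [evalFrom_append, hpj3]
            show evalFrom u r' j = some p
            rw [← hqj']; exact hr'
        · have hjq' : j < q := by omega
          have hposj : posX u a j = some q :=
            posX_eq_some_iff.mpr ⟨hjq', hqlen, hqa, fun t ht1 ht2 => hmin t (by omega) ht2⟩
          refine Or.inr ⟨pj ++ (RL.X a :: r'), ?_, ?_, ?_, ?_, ?_⟩
          · exact hpj1.sublist.append (List.Sublist.refl _)
          · simp only [List.length_append, List.length_cons]; omega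
          · intro h; rw [List.append_eq_nil_iff] at h; exact hpj2 h.1
          · rw [head?_append_left hpj2]; exact hheads
          · rw [evalFrom_append, hpj3]
            show (posX u a j).bind (evalFrom u r') = some p
            rw [hposj]; exact hr'
    | Y a =>
      have hjc : j = c := halY trivial
      rw [show evalFrom u (RL.Y a :: r') c = (posY u a c).bind (evalFrom u r') from rfl] at hrest
      obtain ⟨q, hq, hr'⟩ := Option.bind_eq_some_iff.mp hrest
      obtain ⟨hqc, hq1, hqlen, hqa, hmax⟩ := posY_eq_some_iff.mp hq
      have hpre' : evalFrom u (pre ++ [RL.Y a]) st = some q := by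
        rw [evalFrom_append, hpre]
        show (posY u a c).bind (evalFrom u []) = some q
        rw [hq]; rfl
      by_cases hiq : i < q
      · -- no violation
        match r' with
        | [] =>
          rcases ih (pre ++ [RL.Y a]) q i q hpre' (fun h => h.elim) (fun h => h.elim) hiq
              (certI.imp id (fun ⟨pi, h1, h2, h3, h4⟩ =>
                ⟨pi, h1.trans (List.prefix_append _ _), h2, h3, fun h => h.elim⟩))
              (Or.inr ⟨pre ++ [RL.Y a], List.prefix_refl _, by simp, hpre', fun h => h.elim⟩)
              hr' with hc | ⟨s, hs1, hs2, hs3, hs4, hs5⟩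
          · exact Or.inl ⟨q, hjc ▸ hq, hiq, hc⟩
          · refine Or.inr ⟨s, by simpa using hs1, by simp at hs2 ⊢; omega, hs3, ?_, hs5⟩
            rw [hs4]; simp
        | RL.Y b :: r'' =>
          rcases ih (pre ++ [RL.Y a]) q i q hpre' (fun h => h.elim) (fun _ => rfl) hiq
              (certI.imp id (fun ⟨pi, h1, h2, h3, h4⟩ =>
                ⟨pi, h1.trans (List.prefix_append _ _), h2, h3, fun _ => by
                  have := h1.length_le; simp; omega⟩))
              (Or.inr ⟨pre ++ [RL.Y a], List.prefix_refl _, by simp, hpre', fun h => h.elim⟩)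
              hr' with hc | ⟨s, hs1, hs2, hs3, hs4, hs5⟩
          · exact Or.inl ⟨q, hjc ▸ hq, hiq, hc⟩
          · refine Or.inr ⟨s, by simpa using hs1, by simp at hs2 ⊢; omega, hs3, ?_, hs5⟩
            rw [hs4]; simp
        | RL.X b :: r'' =>
          rcases ih (pre ++ [RL.Y a]) q q j hpre' (fun _ => rfl) (fun h => h.elim)
              (by omega)
              (Or.inr ⟨pre ++ [RL.Y a], List.prefix_refl _, by simp, hpre', fun h => h.elim⟩)
              (certJ.imp id (fun ⟨pj, h1, h2, h3, h4⟩ =>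
                ⟨pj, h1.trans (List.prefix_append _ _), h2, h3, fun _ => by
                  have := h1.length_le; simp; omega⟩))
              hr' with hc | ⟨s, hs1, hs2, hs3, hs4, hs5⟩
          · exact Or.inl ⟨q, hjc ▸ hq, hiq, hc⟩
          · refine Or.inr ⟨s, by simpa using hs1, by simp at hs2 ⊢; omega, hs3, ?_, hs5⟩
            rw [hs4]; simp
      · -- violation: q ≤ i
        have hqi : q ≤ i := Nat.le_of_not_lt hiq
        rcases certI with rfl | ⟨pi, hpi1, hpi2, hpi3, hpi4⟩
        · omega
        have hilt : pi.length < pre.length := hpi4 trivial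
        have hprene : pre ≠ [] := by
          intro h; rw [h] at hilt; simp at hilt
        have hheads : pi.head? = (pre ++ (RL.Y a :: r')).head? := by
          rw [head?_append_left hprene, head?_of_prefix hpi1 hpi2]
        by_cases hqi' : q = i
        · refine Or.inr ⟨pi ++ r', ?_, ?_, ?_, ?_, ?_⟩
          · exact hpi1.sublist.append (List.sublist_cons_self _ _)
          · simp only [List.length_append, List.length_cons]; omega
          · intro h; rw [List.append_eq_nil_iff] at h; exact hpi2 h.1
          · rw [head?_append_left hpi2]; exact hheads
          · rw [evalFrom_append, hpi3]
            show evalFrom u r' i = some p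
            rw [← hqi']; exact hr'
        · have hqi'' : q < i := by omega
          have hposi : posY u a i = some q :=
            posY_eq_some_iff.mpr ⟨hqi'', hq1, hqlen, hqa, fun t ht1 ht2 => hmax t ht1 (by omega)⟩
          refine Or.inr ⟨pi ++ (RL.Y a :: r'), ?_, ?_, ?_, ?_, ?_⟩
          · exact hpi1.sublist.append (List.Sublist.refl _)
          · simp only [List.length_append, List.length_cons]; omega
          · intro h; rw [List.append_eq_nil_iff] at h; exact hpi2 h.1
          · rw [head?_append_left hpi2]; exact hheads
          · rw [evalFrom_append, hpi3]
            show (posY u a i).bind (evalFrom u r') = some p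
            rw [hposi]; exact hr'

end Main
section Wrapper

variable {A : Type*} [DecidableEq A]

lemma wrapper (u : List A) (p : ℕ) :
    ∀ (N : ℕ) (r : List (RL A)), r.length ≤ N → r ≠ [] → reval u r = some p →
      ∃ s, s.Sublist r ∧ s ≠ [] ∧ s.head? = r.head? ∧ (s = r ∨ s.length < r.length) ∧
        Condensed u s ∧ reval u s = some p := by
  intro N
  induction N with
  | zero =>
    intro r hN hne _
    cases r with
    | nil => exact absurd rfl hne
    | cons z t => simp at hN
  | succ N ihN =>
    intro r hN hne hrev
    have halX : startsX r → (0 : ℕ) = rstart u r := fun h => (startsX_rstart h).symm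
    have halY : startsY r → u.length + 1 = rstart u r := fun h => (startsY_rstart h).symm
    rcases main_lemma u (rstart u r) p r [] (rstart u r) 0 (u.length + 1) rfl halX halY
        (by omega) (Or.inl rfl) (Or.inl rfl) hrev with hc | ⟨s, hs1, hs2, hs3, hs4, hs5⟩
    · exact ⟨r, List.Sublist.refl _, hne, rfl, Or.inl rfl, ⟨hne, hc⟩, hrev⟩
    · rw [List.nil_append] at hs1 hs4
      simp only [List.length_nil, Nat.zero_add] at hs2
      have hrev' : reval u s = some p := by
        rw [reval, rstart_eq_of_head? hs4]; exact hs5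
      obtain ⟨s', h1, h2, h3, h4, h5, h6⟩ := ihN s (by omega) hs3 hrev'
      refine ⟨s', h1.trans hs1, h2, h3.trans hs4, Or.inr ?_, h5, h6⟩
      rcases h4 with rfl | h4
      · exact hs2
      · omega

end Wrapper
/-- If a position `p` of `u` is defined by a ranker `r ∈ R̲^X_{m,n}`, then some
ranker `s ∈ R̲^X_{m,n}` is condensed on `u` and defines the same position `p`;
dually for `R̲^Y_{m,n}`. -/
theorem stmt10 {A : Type*} [DecidableEq A] (m n : ℕ) (u : List A) (p : ℕ) :
    (∀ r : List (RL A), memRX m n r → reval u r = some p →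
      ∃ s : List (RL A), memRX m n s ∧ Condensed u s ∧ reval u s = some p) ∧
    (∀ r : List (RL A), memRY m n r → reval u r = some p →
      ∃ s : List (RL A), memRY m n s ∧ Condensed u s ∧ reval u s = some p) := by
  constructor
  · intro r hr hrev
    obtain ⟨s, hsub, hne, hhead, hlen, hcond, heval⟩ :=
      wrapper u p r.length r le_rfl hr.1 hrev
    refine ⟨s, ⟨hne, ?_⟩, hcond, heval⟩
    rcases hr.2 with ⟨h1, h2, h3⟩ | ⟨h1, h2⟩
    · by_cases hb : nBlocks s = m
      · exact Or.inl ⟨hsub.length_le.trans h1, hb, startsX_of_head? hhead h3⟩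
      · have hbm : nBlocks s < m :=
          lt_of_le_of_ne (h2 ▸ nBlocks_mono hsub) hb
        refine Or.inr ⟨hbm, ?_⟩
        rcases hlen with rfl | hlt
        · exact absurd h2 hb
        · omega
    · exact Or.inr ⟨lt_of_le_of_lt (nBlocks_mono hsub) h1,
        lt_of_le_of_lt hsub.length_le h2⟩
  · intro r hr hrev
    obtain ⟨s, hsub, hne, hhead, hlen, hcond, heval⟩ :=
      wrapper u p r.length r le_rfl hr.1 hrev
    refine ⟨s, ⟨hne, ?_⟩, hcond, heval⟩
    rcases hr.2 with ⟨h1, h2, h3⟩ | ⟨h1, h2⟩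
    · by_cases hb : nBlocks s = m
      · exact Or.inl ⟨hsub.length_le.trans h1, hb, startsY_of_head? hhead h3⟩
      · have hbm : nBlocks s < m :=
          lt_of_le_of_ne (h2 ▸ nBlocks_mono hsub) hb
        refine Or.inr ⟨hbm, ?_⟩
        rcases hlen with rfl | hlt
        · exact absurd h2 hb
        · omega
    · exact Or.inr ⟨lt_of_le_of_lt (nBlocks_mono hsub) h1,
        lt_of_le_of_lt hsub.length_le h2⟩

end Rankers
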